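/- Let g be a network, i a vertex of g, and j a vertex with ij ∉ g. (i) If i is not isolated in g and j ∉ Conn_g(i), then C_ecc(i, g+ij) ≤ C_ecc(i, g). (ii) If j ∈ Conn_g(i), then C_ecc(i, g+ij) ≥ C_ecc(i, g); moreover the inequality is strict if for every vertex k ∈ Conn_g(i) with d_g(i,k) = ecc_g(i), j lies on some shortest path from i to k in g (that is, d_g(i,j) + d_g(j,k) = d_g(i,k)). -/
import Mathlib


open SimpleGraph

/-- Degree of vertex `i` in network `g`. -/
noncomputable def deg {V : Type*} (g : SimpleGraph V) (i : V) : ℕ :=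
  Nat.card (g.neighborSet i)

/-- The network `g` with the (missing) edge `ij` added. -/
def addE {V : Type*} (g : SimpleGraph V) (i j : V) : SimpleGraph V :=
  g ⊔ SimpleGraph.fromEdgeSet {s(i, j)}

/-- The network `g` with the edge `ij` removed. -/
def delE {V : Type*} (g : SimpleGraph V) (i j : V) : SimpleGraph V :=
  g.deleteEdges {s(i, j)}

/-- Utility of agent `i` in the game with centralities `C` and edge cost `c`. -/
noncomputable def util {V : Type*} (C : V → SimpleGraph V → ℝ) (c : ℝ) (i : V)
    (g : SimpleGraph V) : ℝ :=
  C i g - c * (deg g i)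

/-- Adding the missing edge `ij` is an improving move. -/
def ImprovingAdd {V : Type*} (C : V → SimpleGraph V → ℝ) (c : ℝ) (g : SimpleGraph V)
    (i j : V) : Prop :=
  util C c i (addE g i j) ≥ util C c i g ∧ util C c j (addE g i j) ≥ util C c j g ∧
    (util C c i (addE g i j) > util C c i g ∨ util C c j (addE g i j) > util C c j g)

/-- Deleting the edge `ij` is an improving move. -/
def ImprovingDel {V : Type*} (C : V → SimpleGraph V → ℝ) (c : ℝ) (g : SimpleGraph V)
    (i j : V) : Prop :=
  util C c i (delE g i j) > util C c i g ∨ util C c j (delE g i j) > util C c j g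

/-- `g` is pairwise stable at edge cost `c`. -/
def PairwiseStable {V : Type*} (C : V → SimpleGraph V → ℝ) (c : ℝ) (g : SimpleGraph V) : Prop :=
  (∀ i j : V, i ≠ j → ¬ g.Adj i j → ¬ ImprovingAdd C c g i j) ∧
  (∀ i j : V, g.Adj i j → ¬ ImprovingDel C c g i j)

/-- `g` is asymptotically pairwise stable. -/
def APSN {V : Type*} (C : V → SimpleGraph V → ℝ) (g : SimpleGraph V) : Prop :=
  ∃ ε₀ : ℝ, 0 < ε₀ ∧ ∀ c : ℝ, 0 < c → c < ε₀ → PairwiseStable C c g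

/-- Axiom 1: the centrality of agent `i` is increasing. -/
def Axiom1 {V : Type*} (C : V → SimpleGraph V → ℝ) (i : V) : Prop :=
  ∀ (g : SimpleGraph V) (j : V), j ≠ i → ¬ g.Adj i j → C i (addE g i j) > C i g

/-- Axiom 1′: the centrality of agent `i` is decreasing. -/
def Axiom1' {V : Type*} (C : V → SimpleGraph V → ℝ) (i : V) : Prop :=
  ∀ (g : SimpleGraph V) (j : V), j ≠ i → ¬ g.Adj i j → C i (addE g i j) < C i g

/-- Axiom 2: the centrality of agent `i` is componentwise. -/
def Axiom2 {V : Type*} (C : V → SimpleGraph V → ℝ) (i : V) : Prop :=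
  ∀ (g : SimpleGraph V) (j : V), j ≠ i → ¬ g.Adj i j →
    ((g.Reachable i j → C i (addE g i j) > C i g) ∧
     (¬ g.Reachable i j → C i (addE g i j) ≤ C i g))

/-- Axiom 2′: the centrality of agent `i` is peripheral. -/
def Axiom2' {V : Type*} (C : V → SimpleGraph V → ℝ) (i : V) : Prop :=
  ∀ (g : SimpleGraph V) (j : V), j ≠ i → ¬ g.Adj i j →
    ((g.Reachable i j → C i (addE g i j) ≤ C i g) ∧
     (¬ g.Reachable i j → C i (addE g i j) > C i g))

/-- The centrality of agent `i` is degree homophilic with (strictly increasing) `f`. -/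
def DegreeHomophilic {V : Type*} (C : V → SimpleGraph V → ℝ) (i : V) (f : ℕ → ℤ) : Prop :=
  ∀ (g : SimpleGraph V) (j : V), j ≠ i → ¬ g.Adj i j →
    (C i (addE g i j) > C i g ↔ (deg g j : ℤ) ≤ f (deg g i))

open scoped Classical in
/-- Eccentricity of `i` in `g`: the maximum distance from `i` to a vertex of its
connected component (`0` for an isolated vertex). -/
noncomputable def ecc {V : Type*} [Fintype V] (g : SimpleGraph V) (i : V) : ℕ :=
  Finset.univ.sup (fun j => if g.Reachable i j then g.dist i j else 0)

open scoped Classical in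
/-- Eccentricity centrality of `i` in `g`: `0` if `i` is isolated,
`(n-1)/ecc_g(i)` otherwise. -/
noncomputable def Cecc {V : Type*} [Fintype V] (g : SimpleGraph V) (i : V) : ℝ :=
  if ∃ j, g.Adj i j then ((Fintype.card V : ℝ) - 1) / (ecc g i : ℝ) else 0

section Helpers

variable {V : Type*}

lemma addE_adj' (g : SimpleGraph V) (i j a b : V) (hij : i ≠ j) :
    (addE g i j).Adj a b ↔ g.Adj a b ∨ (a = i ∧ b = j) ∨ (a = j ∧ b = i) := by
  simp only [addE, sup_adj, fromEdgeSet_adj, Set.mem_singleton_iff, Sym2.eq_iff]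
  constructor
  · rintro (h | ⟨h, _⟩)
    · exact Or.inl h
    · exact Or.inr h
  · rintro (h | h | h)
    · exact Or.inl h
    · exact Or.inr ⟨Or.inl h, by rintro rfl; exact hij (h.1.symm.trans h.2)⟩
    · exact Or.inr ⟨Or.inr h, by rintro rfl; exact hij (h.2.symm.trans h.1)⟩

lemma adj_addE (g : SimpleGraph V) (i j : V) (hij : i ≠ j) : (addE g i j).Adj i j := by
  rw [addE_adj' g i j i j hij]; exact Or.inr (Or.inl ⟨rfl, rfl⟩)

lemma le_addE (g : SimpleGraph V) (i j : V) : g ≤ addE g i j := le_sup_left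

lemma dist_le_of_le {g g' : SimpleGraph V} (h : g ≤ g') {a b : V} (hr : g.Reachable a b) :
    g'.dist a b ≤ g.dist a b := by
  obtain ⟨w, hw⟩ := hr.exists_walk_length_eq_dist
  calc g'.dist a b ≤ (w.mapLe h).length := SimpleGraph.dist_le _
  _ = w.length := SimpleGraph.Walk.length_map _ w
  _ = g.dist a b := hw

lemma addE_adj_cases {g : SimpleGraph V} {i j a b : V} (h : (addE g i j).Adj a b) :
    g.Adj a b ∨ (a = i ∧ b = j) ∨ (a = j ∧ b = i) := by
  simp only [addE, sup_adj, fromEdgeSet_adj, Set.mem_singleton_iff, Sym2.eq_iff] at h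
  rcases h with h | ⟨h, _⟩
  · exact Or.inl h
  · exact Or.inr h

/-- If `i` and `j` are already connected, reachability in `addE g i j` implies
reachability in `g`. -/
lemma reach_of_reach_addE {g : SimpleGraph V} {i j : V} (hr : g.Reachable i j)
    {a b : V} (w : (addE g i j).Walk a b) : g.Reachable a b := by
  induction w with
  | nil => exact SimpleGraph.Reachable.refl _
  | @cons a c b h p ih =>
    rcases addE_adj_cases h with h' | ⟨rfl, rfl⟩ | ⟨rfl, rfl⟩
    · exact h'.reachable.trans ih
    · exact hr.trans ih
    · exact hr.symm.trans ih

open scoped Classical in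
/-- Projection used for part (i): collapse the component of `j` to `i`. -/
lemma walk_proj {g : SimpleGraph V} {i j : V} (hnr : ¬ g.Reachable i j)
    {a b : V} (w : (addE g i j).Walk a b) :
    ∃ w' : g.Walk (if g.Reachable j a then i else a) (if g.Reachable j b then i else b),
      w'.length ≤ w.length := by
  induction w with
  | nil => exact ⟨SimpleGraph.Walk.nil, le_rfl⟩
  | @cons a c b h p ih =>
    obtain ⟨w', hw'⟩ := ih
    have hij : i ≠ j := by rintro rfl; exact hnr (SimpleGraph.Reachable.refl _)
    have heq : ∀ (hac : (if g.Reachable j a then i else a) = (if g.Reachable j c then i else c)),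
        ∃ w'' : g.Walk (if g.Reachable j a then i else a) (if g.Reachable j b then i else b),
          w''.length ≤ (SimpleGraph.Walk.cons h p).length := by
      intro hac
      refine ⟨w'.copy hac.symm rfl, ?_⟩
      rw [SimpleGraph.Walk.length_copy, SimpleGraph.Walk.length_cons]
      omega
    rcases addE_adj_cases h with h' | ⟨rfl, rfl⟩ | ⟨rfl, rfl⟩
    · by_cases hja : g.Reachable j a
      · exact heq (by rw [if_pos hja, if_pos (hja.trans h'.reachable)])
      · have hjc : ¬ g.Reachable j c := fun hjc => hja (hjc.trans h'.symm.reachable)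
        refine ⟨(SimpleGraph.Walk.cons h' (w'.copy (if_neg hjc) rfl)).copy
          (if_neg hja).symm rfl, ?_⟩
        simp only [SimpleGraph.Walk.length_copy, SimpleGraph.Walk.length_cons]
        omega
    · exact heq (by rw [if_neg (fun hji => hnr hji.symm), if_pos (SimpleGraph.Reachable.refl _)])
    · exact heq (by rw [if_pos (SimpleGraph.Reachable.refl _), if_neg (fun hji => hnr hji.symm)])

lemma dist_addE_ge {g : SimpleGraph V} {i j : V} (hnr : ¬ g.Reachable i j)
    {k : V} (hik : g.Reachable i k) : g.dist i k ≤ (addE g i j).dist i k := by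
  classical
  obtain ⟨w, hw⟩ := (hik.mono (le_addE g i j)).exists_walk_length_eq_dist
  obtain ⟨w', hw'⟩ := walk_proj hnr w
  calc g.dist i k ≤ (w'.copy (if_neg (fun hji => hnr hji.symm))
        (if_neg (fun hjk => hnr (hik.trans hjk.symm)))).length := SimpleGraph.dist_le _
  _ = w'.length := SimpleGraph.Walk.length_copy _ _ _
  _ ≤ w.length := hw'
  _ = (addE g i j).dist i k := hw

open scoped Classical in
lemma term_le_ecc [Fintype V] (g : SimpleGraph V) (i k : V) :
    (if g.Reachable i k then g.dist i k else 0) ≤ ecc g i :=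
  Finset.le_sup (f := fun k => if g.Reachable i k then g.dist i k else 0) (Finset.mem_univ k)

lemma dist_le_ecc [Fintype V] {g : SimpleGraph V} {i k : V} (h : g.Reachable i k) :
    g.dist i k ≤ ecc g i := by
  classical
  have := term_le_ecc g i k
  rwa [if_pos h] at this

lemma one_le_ecc [Fintype V] {g : SimpleGraph V} {i : V} (h : ∃ k, g.Adj i k) :
    1 ≤ ecc g i := by
  obtain ⟨k, hk⟩ := h
  have h1 : g.dist i k = 1 := SimpleGraph.dist_eq_one_iff_adj.mpr hk
  calc 1 = g.dist i k := h1.symm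
  _ ≤ ecc g i := dist_le_ecc hk.reachable

end Helpers

theorem statement_11 {V : Type*} [Fintype V] (g : SimpleGraph V) (i j : V) (hij : i ≠ j)
    (hadj : ¬ g.Adj i j) :
    -- (i)
    ((∃ k, g.Adj i k) → ¬ g.Reachable i j → Cecc (addE g i j) i ≤ Cecc g i) ∧
    -- (ii)
    (g.Reachable i j →
      Cecc (addE g i j) i ≥ Cecc g i ∧
      ((∀ k : V, g.Reachable i k → g.dist i k = ecc g i →
          g.dist i j + g.dist j k = g.dist i k) →
        Cecc (addE g i j) i > Cecc g i)) := by
  classical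
  have hAdd : (addE g i j).Adj i j := adj_addE g i j hij
  have hle : g ≤ addE g i j := le_addE g i j
  have hcard : (1 : ℝ) ≤ (Fintype.card V : ℝ) := by
    have : 0 < Fintype.card V := Fintype.card_pos_iff.mpr ⟨i⟩
    exact_mod_cast this
  have hnn : (0 : ℝ) ≤ (Fintype.card V : ℝ) - 1 := by linarith
  have hecc' : 1 ≤ ecc (addE g i j) i := one_le_ecc ⟨j, hAdd⟩
  constructor
  · -- part (i)
    intro hI hnr
    have heccpos : 1 ≤ ecc g i := one_le_ecc hI
    have hmono : ecc g i ≤ ecc (addE g i j) i := by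
      apply Finset.sup_le
      intro k _
      by_cases hk : g.Reachable i k
      · rw [if_pos hk]
        calc g.dist i k ≤ (addE g i j).dist i k := dist_addE_ge hnr hk
        _ ≤ ecc (addE g i j) i := dist_le_ecc (hk.mono hle)
      · rw [if_neg hk]; exact Nat.zero_le _
    simp only [Cecc]
    rw [if_pos ⟨j, hAdd⟩, if_pos hI]
    exact div_le_div_of_nonneg_left hnn (by exact_mod_cast heccpos) (by exact_mod_cast hmono)
  · -- part (ii)
    intro hr
    have hI : ∃ k, g.Adj i k := by
      obtain ⟨w⟩ := hr
      cases w with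
      | nil => exact absurd rfl hij
      | cons h p => exact ⟨_, h⟩
    have heccpos : 1 ≤ ecc g i := one_le_ecc hI
    have hmono : ecc (addE g i j) i ≤ ecc g i := by
      apply Finset.sup_le
      intro k _
      by_cases hk : (addE g i j).Reachable i k
      · rw [if_pos hk]
        obtain ⟨w⟩ := hk
        have hgk : g.Reachable i k := reach_of_reach_addE hr w
        calc (addE g i j).dist i k ≤ g.dist i k := dist_le_of_le hle hgk
        _ ≤ ecc g i := dist_le_ecc hgk
      · rw [if_neg hk]; exact Nat.zero_le _
    constructor
    · simp only [ge_iff_le, Cecc]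
      rw [if_pos hI, if_pos (show ∃ k, (addE g i j).Adj i k from ⟨j, hAdd⟩)]
      exact div_le_div_of_nonneg_left hnn (by exact_mod_cast hecc') (by exact_mod_cast hmono)
    · intro hstrict
      have hd0 : 0 < g.dist i j := hr.pos_dist_of_ne hij
      have hd1 : g.dist i j ≠ 1 := fun h1 => hadj (SimpleGraph.dist_eq_one_iff_adj.mp h1)
      have hd2 : 2 ≤ g.dist i j := by omega
      have hb : ecc (addE g i j) i ≤ ecc g i - 1 := by
        apply Finset.sup_le
        intro k _
        by_cases hk : (addE g i j).Reachable i k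
        · rw [if_pos hk]
          obtain ⟨w⟩ := hk
          have hgk : g.Reachable i k := reach_of_reach_addE hr w
          have hdk : g.dist i k ≤ ecc g i := dist_le_ecc hgk
          rcases lt_or_eq_of_le hdk with hlt | heq
          · have := dist_le_of_le hle hgk
            omega
          · have hsum := hstrict k hgk heq
            have hjk : g.Reachable j k := hr.symm.trans hgk
            obtain ⟨wjk, hwjk⟩ := hjk.exists_walk_length_eq_dist
            have hstep : (addE g i j).dist i k ≤ 1 + g.dist j k := by
              calc (addE g i j).dist i k
                  ≤ (SimpleGraph.Walk.cons hAdd (wjk.mapLe hle)).length :=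
                    SimpleGraph.dist_le _
              _ = (wjk.mapLe hle).length + 1 := SimpleGraph.Walk.length_cons _ _
              _ = wjk.length + 1 := by rw [SimpleGraph.Walk.length_map _ wjk]
              _ = 1 + g.dist j k := by omega
            omega
        · rw [if_neg hk]; exact Nat.zero_le _
      have hlt : ecc (addE g i j) i < ecc g i := by omega
      have hcard2 : (1 : ℝ) < (Fintype.card V : ℝ) := by
        have : 1 < Fintype.card V := Fintype.one_lt_card_iff_nontrivial.mpr ⟨⟨i, j, hij⟩⟩
        exact_mod_cast this
      simp only [gt_iff_lt, Cecc]
      rw [if_pos hI, if_pos (show ∃ k, (addE g i j).Adj i k from ⟨j, hAdd⟩)]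
      exact div_lt_div_of_pos_left (by linarith) (by exact_mod_cast hecc')
        (by exact_mod_cast hlt)
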